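/- For a binary symmetric source X ∼ Bernoulli(1/2), binary side information S_d that is the output of a BSC with crossover probability p₀ ∈ (0,1/2) and input X, and Hamming distortion, the common-reconstruction rate-distortion function satisfies R_cr(D) = min over P_{X̂|X} with E[d_H(X,X̂)] ≤ D of I(X̂; X | S_d) = h(p₀ ⋆ D) − h(D) for all 0 ≤ D ≤ 1/2, where p₀ ⋆ D = p₀(1−D) + (1−p₀)D and h is the binary entropy function. -/

import Mathlib

open Finset
noncomputable section
namespace IT

variable {Ω : Type} [Fintype Ω]

/-- Marginal probability mass of the event `X = a` under the weight function `p`. -/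
def marg {α : Type} [Fintype α] [DecidableEq α]
    (p : Ω → ℝ) (X : Ω → α) (a : α) : ℝ :=
  ∑ ω, if X ω = a then p ω else 0

/-- Shannon entropy (natural logarithm) of the random variable `X`. -/
def ent {α : Type} [Fintype α] [DecidableEq α] (p : Ω → ℝ) (X : Ω → α) : ℝ :=
  ∑ a, Real.negMulLog (marg p X a)

/-- Conditional entropy `H(X | Y)`. -/
def condEnt {α β : Type} [Fintype α] [DecidableEq α] [Fintype β] [DecidableEq β]
    (p : Ω → ℝ) (X : Ω → α) (Y : Ω → β) : ℝ :=
  ent p (fun ω => (X ω, Y ω)) - ent p Y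

/-- Mutual information `I(X; Y)`. -/
def mi {α β : Type} [Fintype α] [DecidableEq α] [Fintype β] [DecidableEq β]
    (p : Ω → ℝ) (X : Ω → α) (Y : Ω → β) : ℝ :=
  ent p X + ent p Y - ent p (fun ω => (X ω, Y ω))

/-- Conditional mutual information `I(X; Y | Z)`. -/
def condMI {α β γ : Type} [Fintype α] [DecidableEq α] [Fintype β] [DecidableEq β]
    [Fintype γ] [DecidableEq γ]
    (p : Ω → ℝ) (X : Ω → α) (Y : Ω → β) (Z : Ω → γ) : ℝ :=
  condEnt p X Z + condEnt p Y Z - condEnt p (fun ω => (X ω, Y ω)) Z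

/-- `X` and `Y` are conditionally independent given `Z`:
`P(X=a, Z=c) ⬝ P(Y=b, Z=c) = P(X=a, Y=b, Z=c) ⬝ P(Z=c)`. -/
def CondIndep {α β γ : Type} [Fintype α] [DecidableEq α] [Fintype β] [DecidableEq β]
    [Fintype γ] [DecidableEq γ]
    (p : Ω → ℝ) (X : Ω → α) (Y : Ω → β) (Z : Ω → γ) : Prop :=
  ∀ a b c,
    marg p (fun ω => (X ω, Z ω)) (a, c) * marg p (fun ω => (Y ω, Z ω)) (b, c) =
    marg p (fun ω => (X ω, Y ω, Z ω)) (a, b, c) * marg p Z c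

/-- `p` is a probability mass function on `Ω`. -/
def IsProb (p : Ω → ℝ) : Prop := (∀ ω, 0 ≤ p ω) ∧ ∑ ω, p ω = 1

end IT

/-- Binary entropy (natural logarithm). -/
def hbin (t : ℝ) : ℝ := Real.negMulLog t + Real.negMulLog (1 - t)

/-- Binary convolution `a ⋆ b = a(1−b) + (1−a)b`. -/
def star (a b : ℝ) : ℝ := a * (1 - b) + (1 - a) * b

/-- Joint law of `(X, S_d, X̂)` for a uniform binary source `X`, a `BSC(p₀)` producing
`S_d` from `X`, and a test channel `Qh = P_{X̂|X}`. -/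
def jointCR (p0 : ℝ) (Qh : Bool → Bool → ℝ) : Bool × Bool × Bool → ℝ :=
  fun ω => (1 / 2) * (if ω.2.1 = ω.1 then 1 - p0 else p0) * Qh ω.2.2 ω.1

lemma continuous_hbin : Continuous hbin := by unfold hbin; fun_prop

lemma hasDerivAt_hbin {x : ℝ} (hx : x ≠ 0) (hx1 : x ≠ 1) :
    HasDerivAt hbin (Real.log (1 - x) - Real.log x) x := by
  have h1 : HasDerivAt (fun t : ℝ => 1 - t) (-1) x := by
    simpa using (hasDerivAt_id x).const_sub 1
  have h2 : HasDerivAt (fun t : ℝ => Real.negMulLog (1 - t))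
      ((-Real.log (1 - x) - 1) * (-1)) x :=
    (Real.hasDerivAt_negMulLog (by intro h; apply hx1; linarith [sub_eq_zero.mp h])).comp x h1
  have h3 := (Real.hasDerivAt_negMulLog hx).add h2
  refine h3.congr_deriv ?_
  ring

lemma stepA {d s t : ℝ} (hd : d ≤ 1/2) (hds : d ≤ s) (hs : s ≤ 1/2)
    (ht0 : 0 ≤ t) (htd : t ≤ d) :
    hbin s - hbin d ≤ (hbin (s+t) + hbin (s-t))/2 - (hbin (d+t) + hbin (d-t))/2 := by
  set G : ℝ → ℝ := fun u => (hbin (d+u) + hbin (d-u)) - (hbin (s+u) + hbin (s-u)) with hG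
  have hanti : AntitoneOn G (Set.Icc 0 d) := by
    apply antitoneOn_of_hasDerivWithinAt_nonpos (convex_Icc 0 d)
      (f' := fun u => ((Real.log (1-(d+u)) - Real.log (d+u))
        - (Real.log (1-(d-u)) - Real.log (d-u)))
        - ((Real.log (1-(s+u)) - Real.log (s+u))
        - (Real.log (1-(s-u)) - Real.log (s-u))))
    · exact ((((continuous_hbin.comp (continuous_const.add continuous_id)).add
        (continuous_hbin.comp (continuous_const.sub continuous_id))).sub
        ((continuous_hbin.comp (continuous_const.add continuous_id)).add
        (continuous_hbin.comp (continuous_const.sub continuous_id)))).continuousOn)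
    · intro x hx
      rw [interior_Icc] at hx
      obtain ⟨hx0, hxd⟩ := hx
      have hdx0 : 0 < d - x := by linarith
      have hdx1 : d + x < 1 := by linarith
      have hsx0 : 0 < s - x := by linarith
      have hsx1 : s + x < 1 := by linarith
      have hgd : HasDerivAt (fun u : ℝ => d + u) 1 x := by
        simpa using (hasDerivAt_id x).const_add d
      have hgs : HasDerivAt (fun u : ℝ => s + u) 1 x := by
        simpa using (hasDerivAt_id x).const_add s
      have H1 : HasDerivAt (fun u : ℝ => hbin (d+u)) (Real.log (1-(d+x)) - Real.log (d+x)) x := by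
        simpa [Function.comp_def] using (hasDerivAt_hbin (x := d + x) (by intro h; rw [h] at hdx1; linarith) (by linarith)).comp x hgd
      have H2 : HasDerivAt (fun u : ℝ => hbin (d-u))
          (-(Real.log (1-(d-x)) - Real.log (d-x))) x := by
        have := (hasDerivAt_hbin (x := d - x) hdx0.ne' (by linarith)).comp x
          ((hasDerivAt_id x).const_sub d)
        refine this.congr_deriv ?_; ring
      have H3 : HasDerivAt (fun u : ℝ => hbin (s+u)) (Real.log (1-(s+x)) - Real.log (s+x)) x := by
        simpa [Function.comp_def] using (hasDerivAt_hbin (x := s + x) (by intro h; rw [h] at hsx1; linarith) (by linarith)).comp x hgs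
      have H4 : HasDerivAt (fun u : ℝ => hbin (s-u))
          (-(Real.log (1-(s-x)) - Real.log (s-x))) x := by
        have := (hasDerivAt_hbin (x := s - x) hsx0.ne' (by linarith)).comp x
          ((hasDerivAt_id x).const_sub s)
        refine this.congr_deriv ?_; ring
      have := ((H1.add H2).sub (H3.add H4)).hasDerivWithinAt (s := interior (Set.Icc 0 d))
      exact this.congr_deriv (by ring)
    · intro x hx
      rw [interior_Icc] at hx
      obtain ⟨hx0, hxd⟩ := hx
      have hdx0 : 0 < d - x := by linarith
      have hdx1 : 0 < 1 - (d + x) := by linarith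
      have hdx1' : 0 < 1 - (d - x) := by linarith
      have hsx0 : 0 < s - x := by linarith
      have hsx1 : 0 < 1 - (s + x) := by linarith
      have hsx1' : 0 < 1 - (s - x) := by linarith
      have hdpx : 0 < d + x := by linarith
      have hspx : 0 < s + x := by linarith
      have hA : (0:ℝ) < (1-(d+x)) * (d-x) := by positivity
      have hB : (0:ℝ) < (s+x) * (1-(s-x)) := by positivity
      have hC : (0:ℝ) < (1-(s+x)) * (s-x) := by positivity
      have hD2 : (0:ℝ) < (d+x) * (1-(d-x)) := by positivity
      have hprod : (1-(d+x)) * (d-x) * ((s+x) * (1-(s-x)))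
          ≤ (1-(s+x)) * (s-x) * ((d+x) * (1-(d-x))) := by
        nlinarith [mul_pos hx0 (by linarith : (0:ℝ) < 1 - x), sub_nonneg.mpr hds,
          mul_nonneg (sub_nonneg.mpr hds) (by linarith : (0:ℝ) ≤ 1 - s - d)]
      have hlog : Real.log ((1-(d+x))*(d-x)) + Real.log ((s+x)*(1-(s-x)))
          ≤ Real.log ((1-(s+x))*(s-x)) + Real.log ((d+x)*(1-(d-x))) := by
        rw [← Real.log_mul hA.ne' hB.ne', ← Real.log_mul hC.ne' hD2.ne']
        exact Real.log_le_log (by positivity) hprod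
      rw [Real.log_mul hdx1.ne' hdx0.ne', Real.log_mul hspx.ne' hsx1'.ne',
          Real.log_mul hsx1.ne' hsx0.ne', Real.log_mul hdpx.ne' hdx1'.ne'] at hlog
      linarith
  have ht : t ∈ Set.Icc (0:ℝ) d := ⟨ht0, htd⟩
  have h0 : (0:ℝ) ∈ Set.Icc (0:ℝ) d := ⟨le_refl 0, le_trans ht0 htd⟩
  have := hanti h0 ht ht0
  simp only [hG, add_zero, sub_zero] at this
  linarith

lemma stepB {p0 d D : ℝ} (hp0 : 0 < p0) (hp0' : p0 < 1/2)
    (hd0 : 0 ≤ d) (hdD : d ≤ D) (hD : D ≤ 1/2) :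
    hbin (star p0 D) - hbin D ≤ hbin (star p0 d) - hbin d := by
  have hanti : AntitoneOn (fun x => hbin (p0 * (1-x) + (1-p0) * x) - hbin x)
      (Set.Icc 0 (1/2)) := by
    apply antitoneOn_of_hasDerivWithinAt_nonpos (convex_Icc 0 (1/2))
      (f' := fun x => (1 - 2*p0) * (Real.log (1 - (p0 * (1-x) + (1-p0) * x))
          - Real.log (p0 * (1-x) + (1-p0) * x)) - (Real.log (1-x) - Real.log x))
    · exact ((continuous_hbin.comp (by fun_prop)).sub continuous_hbin).continuousOn
    · intro x hx
      rw [interior_Icc] at hx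
      obtain ⟨hx0, hx2⟩ := hx
      have hy0 : 0 < p0 * (1-x) + (1-p0) * x := by nlinarith
      have hy2 : p0 * (1-x) + (1-p0) * x < 1/2 := by nlinarith
      have hinner : HasDerivAt (fun x : ℝ => p0 * (1-x) + (1-p0) * x) (1 - 2*p0) x := by
        have h1 : HasDerivAt (fun x : ℝ => 1 - x) (-1) x := by
          simpa using (hasDerivAt_id x).const_sub 1
        have := (h1.const_mul p0).add ((hasDerivAt_id x).const_mul (1-p0))
        refine this.congr_deriv ?_
        ring
      have H1 : HasDerivAt (fun x : ℝ => hbin (p0 * (1-x) + (1-p0) * x))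
          ((Real.log (1 - (p0 * (1-x) + (1-p0) * x))
            - Real.log (p0 * (1-x) + (1-p0) * x)) * (1 - 2*p0)) x :=
        by simpa [Function.comp_def] using (hasDerivAt_hbin (x := p0 * (1-x) + (1-p0) * x) hy0.ne' (by linarith)).comp x hinner
      have H2 := hasDerivAt_hbin hx0.ne' (by linarith : x ≠ 1)
      have := (H1.sub H2).hasDerivWithinAt (s := interior (Set.Icc 0 (1/2:ℝ)))
      refine this.congr_deriv ?_
      ring
    · intro x hx
      rw [interior_Icc] at hx
      obtain ⟨hx0, hx2⟩ := hx
      set y := p0 * (1-x) + (1-p0) * x with hy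
      have hy0 : 0 < y := by rw [hy]; nlinarith
      have hy2 : y ≤ 1/2 := by rw [hy]; nlinarith
      have hxy : x ≤ y := by rw [hy]; nlinarith
      have hLy0 : 0 ≤ Real.log (1 - y) - Real.log y :=
        sub_nonneg.mpr (Real.log_le_log hy0 (by linarith))
      have h1 : Real.log y ≥ Real.log x := Real.log_le_log hx0 hxy
      have h2 : Real.log (1 - y) ≤ Real.log (1 - x) :=
        Real.log_le_log (by linarith) (by linarith)
      have h3 : (1 - 2*p0) * (Real.log (1 - y) - Real.log y)
          ≤ Real.log (1 - y) - Real.log y :=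
        mul_le_of_le_one_left hLy0 (by linarith)
      linarith
  have h1 : d ∈ Set.Icc (0:ℝ) (1/2) := ⟨hd0, by linarith⟩
  have h2 : D ∈ Set.Icc (0:ℝ) (1/2) := ⟨by linarith, hD⟩
  have := hanti h1 h2 hdD
  simp only at this
  have e1 : star p0 d = p0 * (1-d) + (1-p0) * d := rfl
  have e2 : star p0 D = p0 * (1-D) + (1-p0) * D := rfl
  rw [e1, e2]
  linarith

lemma key_aux {p0 D a b : ℝ} (hp0 : 0 < p0) (hp0' : p0 < 1/2) (hD : D ≤ 1/2)
    (ha0 : 0 ≤ a) (ha1 : a ≤ 1) (hb0 : 0 ≤ b) (hb1 : b ≤ 1)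
    (hab : (a+b)/2 ≤ D) (hba : b ≤ a) :
    hbin (star p0 D) - hbin D
      ≤ (hbin ((1-p0)*a + p0*(1-b)) + hbin (p0*(1-a) + (1-p0)*b))/2
        - (hbin a + hbin b)/2 := by
  set d := (a+b)/2 with hdDef
  set t := (a-b)/2 with htDef
  set s := p0 * (1-d) + (1-p0) * d with hsDef
  have hd0 : 0 ≤ d := by rw [hdDef]; linarith
  have hd : d ≤ 1/2 := by linarith
  have hds : d ≤ s := by rw [hsDef]; nlinarith
  have hs : s ≤ 1/2 := by rw [hsDef]; nlinarith
  have ht0 : 0 ≤ t := by rw [htDef]; linarith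
  have htd : t ≤ d := by rw [htDef, hdDef]; linarith
  have hA := stepA hd hds hs ht0 htd
  have e1 : hbin (s + t) = hbin ((1-p0)*a + p0*(1-b)) := by
    rw [show s + t = (1-p0)*a + p0*(1-b) from by rw [hsDef, htDef, hdDef]; ring]
  have e2 : hbin (s - t) = hbin (p0*(1-a) + (1-p0)*b) := by
    rw [show s - t = p0*(1-a) + (1-p0)*b from by rw [hsDef, htDef, hdDef]; ring]
  have e3 : hbin (d + t) = hbin a := by
    rw [show d + t = a from by rw [htDef, hdDef]; ring]
  have e4 : hbin (d - t) = hbin b := by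
    rw [show d - t = b from by rw [htDef, hdDef]; ring]
  have hsstar : star p0 d = s := rfl
  have hB := stepB hp0 hp0' hd0 hab hD
  rw [hsstar] at hB
  rw [e1, e2, e3, e4] at hA
  linarith

lemma key {p0 D a b : ℝ} (hp0 : 0 < p0) (hp0' : p0 < 1/2) (hD : D ≤ 1/2)
    (ha0 : 0 ≤ a) (ha1 : a ≤ 1) (hb0 : 0 ≤ b) (hb1 : b ≤ 1)
    (hab : (a+b)/2 ≤ D) :
    hbin (star p0 D) - hbin D
      ≤ (hbin ((1-p0)*a + p0*(1-b)) + hbin (p0*(1-a) + (1-p0)*b))/2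
        - (hbin a + hbin b)/2 := by
  rcases le_total b a with h | h
  · exact key_aux hp0 hp0' hD ha0 ha1 hb0 hb1 hab h
  · have := key_aux hp0 hp0' hD hb0 hb1 ha0 ha1 (by linarith) h
    have e1 : hbin ((1-p0)*b + p0*(1-a)) = hbin (p0*(1-a) + (1-p0)*b) := by
      rw [show (1-p0)*b + p0*(1-a) = p0*(1-a) + (1-p0)*b from by ring]
    have e2 : hbin (p0*(1-b) + (1-p0)*a) = hbin ((1-p0)*a + p0*(1-b)) := by
      rw [show p0*(1-b) + (1-p0)*a = (1-p0)*a + p0*(1-b) from by ring]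
    rw [e1, e2] at this
    linarith

lemma condMI_eval (p0 : ℝ) (Qh : Bool → Bool → ℝ) (hrow : ∀ x, ∑ xh, Qh xh x = 1) :
    IT.condMI (jointCR p0 Qh) (fun ω => ω.2.2) (fun ω => ω.1) (fun ω => ω.2.1)
    = (hbin ((1-p0) * Qh true false + p0 * (1 - Qh false true))
       + hbin (p0 * (1 - Qh true false) + (1-p0) * Qh false true)) / 2
      - (hbin (Qh true false) + hbin (Qh false true)) / 2 := by
  have hff : Qh false false = 1 - Qh true false := by
    have := hrow false; rw [Fintype.sum_bool] at this; linarith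
  have htt : Qh true true = 1 - Qh false true := by
    have := hrow true; rw [Fintype.sum_bool] at this; linarith
  simp only [IT.condMI, IT.condEnt, IT.ent, IT.marg, jointCR,
    Fintype.sum_prod_type, Fintype.sum_bool, Prod.mk.injEq]
  simp only [hff, htt, reduceIte, Bool.true_eq_false, Bool.false_eq_true, and_true, and_false,
    if_true, if_false, add_zero, zero_add, mul_zero, mul_one]
  rw [show 1 / 2 * (1 - p0) * (1 - Qh false true) + 1 / 2 * (1 - p0) * Qh false true +
        (1 / 2 * p0 * Qh true false + 1 / 2 * p0 * (1 - Qh true false)) = (1/2 : ℝ) from by ring]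
  rw [show 1 / 2 * p0 * (1 - Qh false true) + 1 / 2 * p0 * Qh false true +
        (1 / 2 * (1 - p0) * Qh true false + 1 / 2 * (1 - p0) * (1 - Qh true false)) = (1/2 : ℝ) from by ring]
  rw [show 1 / 2 * (1 - p0) * (1 - Qh false true) + 1 / 2 * p0 * Qh true false
        = 1/2 * (1 - (p0 * (1 - Qh true false) + (1 - p0) * Qh false true)) from by ring]
  rw [show 1 / 2 * p0 * (1 - Qh false true) + 1 / 2 * (1 - p0) * Qh true false
        = 1/2 * ((1 - p0) * Qh true false + p0 * (1 - Qh false true)) from by ring]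
  rw [show 1 / 2 * (1 - p0) * Qh false true + 1 / 2 * p0 * (1 - Qh true false)
        = 1/2 * (p0 * (1 - Qh true false) + (1 - p0) * Qh false true) from by ring]
  rw [show 1 / 2 * p0 * Qh false true + 1 / 2 * (1 - p0) * (1 - Qh true false)
        = 1/2 * (1 - ((1 - p0) * Qh true false + p0 * (1 - Qh false true))) from by ring]
  rw [show 1 / 2 * (1 - p0) * (1 - Qh false true) + 1 / 2 * (1 - p0) * Qh false true
        = 1/2 * (1 - p0) from by ring]
  rw [show 1 / 2 * p0 * (1 - Qh false true) + 1 / 2 * p0 * Qh false true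
        = 1/2 * p0 from by ring]
  rw [show 1 / 2 * p0 * Qh true false + 1 / 2 * p0 * (1 - Qh true false)
        = 1/2 * p0 from by ring]
  rw [show 1 / 2 * (1 - p0) * Qh true false + 1 / 2 * (1 - p0) * (1 - Qh true false)
        = 1/2 * (1 - p0) from by ring]
  simp only [Real.negMulLog_mul, hbin]
  ring

lemma dist_eval (p0 : ℝ) (Qh : Bool → Bool → ℝ) :
    (∑ ω : Bool × Bool × Bool, jointCR p0 Qh ω * (if ω.1 = ω.2.2 then (0:ℝ) else 1))
    = (Qh true false + Qh false true)/2 := by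
  simp only [jointCR, Fintype.sum_prod_type, Fintype.sum_bool, Bool.true_eq_false,
    Bool.false_eq_true, if_true, if_false, reduceIte, mul_zero, mul_one, add_zero, zero_add]
  ring

/-- for the binary symmetric source with `BSC(p₀)` side information and
Hamming distortion, the common-reconstruction rate-distortion function is
`min I(X̂;X|S_d) = h(p₀ ⋆ D) − h(D)` for `0 ≤ D ≤ 1/2`. -/
theorem stmt13 (p0 D : ℝ) (hp0 : 0 < p0) (hp0' : p0 < 1 / 2)
    (hD0 : 0 ≤ D) (hD : D ≤ 1 / 2) :
    sInf { r : ℝ | ∃ Qh : Bool → Bool → ℝ,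
        (∀ xh x, 0 ≤ Qh xh x) ∧ (∀ x, ∑ xh, Qh xh x = 1) ∧
        (∑ ω : Bool × Bool × Bool,
            jointCR p0 Qh ω * (if ω.1 = ω.2.2 then (0 : ℝ) else 1)) ≤ D ∧
        r = IT.condMI (jointCR p0 Qh)
              (fun ω => ω.2.2) (fun ω => ω.1) (fun ω => ω.2.1) }
      = hbin (star p0 D) - hbin D := by
  have hlb : ∀ r ∈ { r : ℝ | ∃ Qh : Bool → Bool → ℝ,
        (∀ xh x, 0 ≤ Qh xh x) ∧ (∀ x, ∑ xh, Qh xh x = 1) ∧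
        (∑ ω : Bool × Bool × Bool,
            jointCR p0 Qh ω * (if ω.1 = ω.2.2 then (0 : ℝ) else 1)) ≤ D ∧
        r = IT.condMI (jointCR p0 Qh)
              (fun ω => ω.2.2) (fun ω => ω.1) (fun ω => ω.2.1) },
      hbin (star p0 D) - hbin D ≤ r := by
    rintro r ⟨Qh, hQ0, hQ1, hdist, rfl⟩
    rw [condMI_eval p0 Qh hQ1]
    have ha1 : Qh true false ≤ 1 := by
      have h1 := hQ1 false; rw [Fintype.sum_bool] at h1
      have h2 := hQ0 false false; linarith
    have hb1 : Qh false true ≤ 1 := by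
      have h1 := hQ1 true; rw [Fintype.sum_bool] at h1
      have h2 := hQ0 true true; linarith
    rw [dist_eval] at hdist
    exact key hp0 hp0' hD (hQ0 true false) ha1 (hQ0 false true) hb1 hdist
  have hQrow : ∀ x : Bool, ∑ xh, (fun xh x => if xh = x then 1 - D else D) xh x = 1 := by
    intro x; rw [Fintype.sum_bool]; cases x <;> norm_num
  have hmem : hbin (star p0 D) - hbin D ∈ { r : ℝ | ∃ Qh : Bool → Bool → ℝ,
        (∀ xh x, 0 ≤ Qh xh x) ∧ (∀ x, ∑ xh, Qh xh x = 1) ∧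
        (∑ ω : Bool × Bool × Bool,
            jointCR p0 Qh ω * (if ω.1 = ω.2.2 then (0 : ℝ) else 1)) ≤ D ∧
        r = IT.condMI (jointCR p0 Qh)
              (fun ω => ω.2.2) (fun ω => ω.1) (fun ω => ω.2.1) } := by
    refine ⟨fun xh x => if xh = x then 1 - D else D, ?_, hQrow, ?_, ?_⟩
    · intro xh x; dsimp only; split <;> linarith
    · rw [dist_eval]; norm_num
    · rw [condMI_eval _ _ hQrow]
      norm_num
      have e1 : hbin ((1-p0)*D + p0*(1-D)) = hbin (star p0 D) := by
        rw [show (1-p0)*D + p0*(1-D) = star p0 D from by simp only [_root_.star]; ring]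
      have e2 : hbin (p0*(1-D) + (1-p0)*D) = hbin (star p0 D) := by
        rw [show p0*(1-D) + (1-p0)*D = star p0 D from rfl]
      rw [e1, e2]
      ring
  apply le_antisymm
  · exact csInf_le ⟨hbin (star p0 D) - hbin D, fun r hr => hlb r hr⟩ hmem
  · exact le_csInf ⟨_, hmem⟩ hlb
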